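/- arXiv:2408.09364 — 2 statements merged into one kernel-verified Lean document; each statement's English description precedes it below -/
import Mathlib

section
/- Under the stated consistency assumptions, for all m > n one has 0 < K_{m,n} ≤ 1 and 0 < Λₙ ≤ 1, the rescaled restrictions agree: Λₘ⁻¹·λ⁽ᵐ⁾|_{(ĉₙ,∞)} = Λₙ⁻¹·λ⁽ⁿ⁾|_{(ĉₙ,∞)} for all m > n; consequently there exists a unique σ-finite Borel measure λ on (0,∞) with λ|_{(ĉₙ,∞)} = Λₙ⁻¹·λ⁽ⁿ⁾|_{(ĉₙ,∞)} for every n, the quantity dₙ/Λₙ does not depend on n (denote it d_∂), and moreover ∫_{(0,∞)} min(1,x) λ(dx) < ∞. -/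
open MeasureTheory Real Filter Topology

private lemma intOn_bdd {μ : Measure ℝ} [IsFiniteMeasure μ] {s : Set ℝ} (hs : MeasurableSet s)
    {f : ℝ → ℝ} (hf : Measurable f) {M : ℝ} (h : ∀ x ∈ s, |f x| ≤ M) :
    IntegrableOn f s μ := by
  refine Integrable.mono' (integrable_const M) hf.aestronglyMeasurable ?_
  filter_upwards [ae_restrict_mem hs] with x hx using by simpa using h x hx

private lemma intOn1 {μ : Measure ℝ} [IsFiniteMeasure μ] {u w : ℝ} (hu : 0 < u) (huw : u < w) :
    IntegrableOn (fun x => 1 - x / w) (Set.Ico u w) μ := by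
  have hw : 0 < w := hu.trans huw
  refine intOn_bdd measurableSet_Ico (by fun_prop) (M := 1) fun x hx => ?_
  have h1 : 0 ≤ x / w := div_nonneg (hu.le.trans hx.1) hw.le
  have h2 : x / w ≤ 1 := (div_le_one hw).2 hx.2.le
  rw [abs_le]
  constructor <;> linarith

private lemma intOnId {μ : Measure ℝ} [IsFiniteMeasure μ] {u w : ℝ} (hu : 0 < u) :
    IntegrableOn (fun x => x) (Set.Ico u w) μ := by
  refine intOn_bdd measurableSet_Ico (by fun_prop) (M := w) fun x hx => ?_
  rw [abs_le]
  refine ⟨by linarith [hx.1, hx.2], hx.2.le⟩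

private lemma aux_bounds {μ : Measure ℝ} [IsFiniteMeasure μ] {a b : ℝ}
    (ha : 0 < a) (hab : a < b) (hm : (μ (Set.Ioi 0)).toReal ≤ 1) :
    0 ≤ ∫ x in Set.Ico a b, (1 - x / b) ∂μ ∧
      ∫ x in Set.Ico a b, (1 - x / b) ∂μ ≤ 1 - a / b := by
  have hb : 0 < b := ha.trans hab
  have hnn : 0 ≤ ∫ x in Set.Ico a b, (1 - x / b) ∂μ := by
    refine setIntegral_nonneg measurableSet_Ico fun x hx => ?_
    have : x / b ≤ 1 := (div_le_one hb).2 hx.2.le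
    linarith
  refine ⟨hnn, ?_⟩
  have hms : (μ (Set.Ico a b)).toReal ≤ 1 := by
    refine le_trans (ENNReal.toReal_mono (measure_ne_top μ _) (measure_mono fun x hx => ?_)) hm
    exact lt_of_lt_of_le ha hx.1
  have h1 : ∫ x in Set.Ico a b, (1 - x / b) ∂μ ≤ ∫ _x in Set.Ico a b, (1 - a / b) ∂μ := by
    refine setIntegral_mono_on (intOn1 ha hab) ?_ measurableSet_Ico fun x hx => ?_
    · exact integrableOn_const (measure_lt_top _ _).ne
    · obtain ⟨hx1, hx2⟩ := hx
      have : a / b ≤ x / b := by gcongr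
      linarith
  have h2 : ∫ _x in Set.Ico a b, (1 - a / b) ∂μ = (μ (Set.Ico a b)).toReal * (1 - a / b) := by
    rw [setIntegral_const, smul_eq_mul, measureReal_def]
  have h3 : 0 ≤ 1 - a / b := by
    have : a / b ≤ 1 := (div_le_one hb).2 hab.le
    linarith
  calc ∫ x in Set.Ico a b, (1 - x / b) ∂μ
      ≤ (μ (Set.Ico a b)).toReal * (1 - a / b) := by rw [← h2]; exact h1
    _ ≤ 1 * (1 - a / b) := mul_le_mul_of_nonneg_right hms h3
    _ = 1 - a / b := one_mul _

/-- Consistency of instantaneous distributions of the approximating Doob's Brownian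
motions, and existence of the limiting measure `λ`. Here `c n = ĉₙ ↓ 0`, `lam n = λ⁽ⁿ⁾`
is a finite measure carried by `[ĉₙ,∞)`, `d n` is its mass at the cemetery, `K m n`
is the normalizing constant relating `λ⁽ᵐ⁾` to `λ⁽ⁿ⁾`, and `Λ n` relates `λ⁽ⁿ⁾` to
`λ⁽⁰⁾`. -/
theorem stmt15 (c : ℕ → ℝ) (hcpos : ∀ n, 0 < c n) (hanti : StrictAnti c)
    (hc0 : Filter.Tendsto c Filter.atTop (nhds 0))
    (lam : ℕ → Measure ℝ) (hfin : ∀ n, IsFiniteMeasure (lam n))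
    (hcarry : ∀ n, lam n (Set.Iio (c n)) = 0)
    (d : ℕ → ℝ) (hd : ∀ n, 0 ≤ d n)
    (hmass : ∀ n, (lam n (Set.Ioi 0)).toReal + d n = 1)
    (K : ℕ → ℕ → ℝ)
    (hK : ∀ m n, n < m →
      K m n = 1 - ∫ x in Set.Ico (c m) (c n), (1 - x / c n) ∂(lam m))
    (hcons : ∀ m n, n < m →
      lam n = (ENNReal.ofReal (K m n))⁻¹ •
        (ENNReal.ofReal ((c n)⁻¹ * ∫ x in Set.Ico (c m) (c n), x ∂(lam m)) •
            Measure.dirac (c n) +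
          (lam m).restrict (Set.Ici (c n))))
    (hdcons : ∀ m n, n < m → d n = d m / K m n)
    (Λ : ℕ → ℝ)
    (hΛ : ∀ n, Λ n = 1 - ∫ x in Set.Ico (c n) (c 0), (1 - x / c 0) ∂(lam n)) :
    (∀ m n, n < m → 0 < K m n ∧ K m n ≤ 1) ∧
    (∀ n, 0 < Λ n ∧ Λ n ≤ 1) ∧
    (∀ m n, n < m →
      (ENNReal.ofReal (Λ m))⁻¹ • (lam m).restrict (Set.Ioi (c n)) =
        (ENNReal.ofReal (Λ n))⁻¹ • (lam n).restrict (Set.Ioi (c n))) ∧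
    (∃! μ : Measure ℝ, SigmaFinite μ ∧ μ (Set.Iic 0) = 0 ∧
        ∀ n, μ.restrict (Set.Ioi (c n)) =
          (ENNReal.ofReal (Λ n))⁻¹ • (lam n).restrict (Set.Ioi (c n))) ∧
    (∀ m n, d m / Λ m = d n / Λ n) ∧
    (∀ μ : Measure ℝ, μ (Set.Iic 0) = 0 →
      (∀ n, μ.restrict (Set.Ioi (c n)) =
        (ENNReal.ofReal (Λ n))⁻¹ • (lam n).restrict (Set.Ioi (c n))) →
      (∫⁻ x in Set.Ioi (0 : ℝ), ENNReal.ofReal (min 1 x) ∂μ) < ⊤) := by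
  classical
  have hmassle : ∀ n, ((lam n) (Set.Ioi 0)).toReal ≤ 1 := fun n => by
    have h1 := hmass n; have h2 := hd n; linarith
  -- (1) bounds on K
  have hKb : ∀ m n, n < m → 0 < K m n ∧ K m n ≤ 1 := by
    intro m n h
    haveI := hfin m
    obtain ⟨h0, h1⟩ := aux_bounds (μ := lam m) (hcpos m) (hanti h) (hmassle m)
    have hab : 0 < c m / c n := div_pos (hcpos m) (hcpos n)
    rw [hK m n h]
    exact ⟨by linarith, by linarith⟩
  have hΛ0 : Λ 0 = 1 := by
    rw [hΛ 0, Set.Ico_self]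
    simp
  -- (2) bounds on Λ
  have hΛb : ∀ n, 0 < Λ n ∧ Λ n ≤ 1 := by
    intro n
    rcases Nat.eq_zero_or_pos n with h | h
    · rw [h, hΛ0]; norm_num
    · haveI := hfin n
      obtain ⟨h0, h1⟩ := aux_bounds (μ := lam n) (hcpos n) (hanti h) (hmassle n)
      have hab : 0 < c n / c 0 := div_pos (hcpos n) (hcpos 0)
      rw [hΛ n]
      exact ⟨by linarith, by linarith⟩
  -- key multiplicative relation
  have hKey : ∀ m n, n < m → Λ m = K m n * Λ n := by
    intro m n hnm
    rcases Nat.eq_zero_or_pos n with hn | hn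
    · subst hn
      rw [hΛ0, mul_one, hΛ m, hK m 0 hnm]
    · haveI := hfin m
      have ha : 0 < c m := hcpos m
      have hb : 0 < c n := hcpos n
      have hC : 0 < c 0 := hcpos 0
      have hab : c m < c n := hanti hnm
      have hbC : c n < c 0 := hanti hn
      have haC : c m < c 0 := hab.trans hbC
      have hKpos : 0 < K m n := (hKb m n hnm).1
      have if1 : IntegrableOn (fun x => 1 - x / c 0) (Set.Ico (c m) (c 0)) (lam m) :=
        intOn1 ha haC
      have if2 : IntegrableOn (fun x => 1 - x / c 0) (Set.Ico (c m) (c n)) (lam m) :=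
        if1.mono_set (Set.Ico_subset_Ico_right hbC.le)
      have if3 : IntegrableOn (fun x => 1 - x / c 0) (Set.Ico (c n) (c 0)) (lam m) :=
        if1.mono_set (Set.Ico_subset_Ico_left hab.le)
      have if4 : IntegrableOn (fun x => 1 - x / c n) (Set.Ico (c m) (c n)) (lam m) :=
        intOn1 ha hab
      have if5 : IntegrableOn (fun x => x) (Set.Ico (c m) (c n)) (lam m) := intOnId ha
      have hA0 : 0 ≤ ∫ x in Set.Ico (c m) (c n), x ∂(lam m) :=
        setIntegral_nonneg measurableSet_Ico fun x hx => (ha.le.trans hx.1)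
      have hsplit : ∫ x in Set.Ico (c m) (c 0), (1 - x / c 0) ∂(lam m)
          = (∫ x in Set.Ico (c m) (c n), (1 - x / c 0) ∂(lam m))
            + ∫ x in Set.Ico (c n) (c 0), (1 - x / c 0) ∂(lam m) := by
        rw [← Set.Ico_union_Ico_eq_Ico hab.le hbC.le,
          setIntegral_union Set.Ico_disjoint_Ico_same measurableSet_Ico if2 if3]
      have hfun : (fun x : ℝ => 1 - x / c 0)
          = fun x => (1 - x / c n) + (c n)⁻¹ * (1 - c n / c 0) * x := by
        funext x
        field_simp
        ring
      have hpoint : ∫ x in Set.Ico (c m) (c n), (1 - x / c 0) ∂(lam m)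
          = (∫ x in Set.Ico (c m) (c n), (1 - x / c n) ∂(lam m))
            + (c n)⁻¹ * (1 - c n / c 0) * ∫ x in Set.Ico (c m) (c n), x ∂(lam m) := by
        conv_lhs => rw [hfun]
        rw [integral_add if4 (if5.const_mul _), integral_const_mul]
      haveI hσfin : IsFiniteMeasure
          ((ENNReal.ofReal ((c n)⁻¹ * ∫ x in Set.Ico (c m) (c n), x ∂(lam m))) •
            Measure.dirac (c n)) := by
        constructor
        rw [Measure.smul_apply, smul_eq_mul]
        exact ENNReal.mul_lt_top ENNReal.ofReal_lt_top (measure_lt_top _ _)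
      have h1 : IntegrableOn (fun x => 1 - x / c 0) (Set.Ico (c n) (c 0))
          ((ENNReal.ofReal ((c n)⁻¹ * ∫ x in Set.Ico (c m) (c n), x ∂(lam m))) •
            Measure.dirac (c n)) := intOn1 hb hbC
      have h2 : IntegrableOn (fun x => 1 - x / c 0) (Set.Ico (c n) (c 0))
          ((lam m).restrict (Set.Ici (c n))) := intOn1 hb hbC
      have hJ : ∫ x in Set.Ico (c n) (c 0), (1 - x / c 0) ∂(lam n)
          = (K m n)⁻¹ * (((c n)⁻¹ * ∫ x in Set.Ico (c m) (c n), x ∂(lam m)) * (1 - c n / c 0)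
              + ∫ x in Set.Ico (c n) (c 0), (1 - x / c 0) ∂(lam m)) := by
        conv_lhs => rw [hcons m n hnm]
        rw [Measure.restrict_smul, integral_smul_measure, Measure.restrict_add,
          integral_add_measure h1 h2, Measure.restrict_smul, integral_smul_measure,
          Measure.restrict_restrict measurableSet_Ico,
          Set.inter_eq_left.mpr Set.Ico_subset_Ici_self,
          setIntegral_dirac (fun x => 1 - x / c 0) (c n) (Set.Ico (c n) (c 0)),
          if_pos (show c n ∈ Set.Ico (c n) (c 0) from ⟨le_refl _, hbC⟩),
          ENNReal.toReal_inv, ENNReal.toReal_ofReal hKpos.le,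
          ENNReal.toReal_ofReal (mul_nonneg (inv_nonneg.2 hb.le) hA0),
          smul_eq_mul, smul_eq_mul]
      have hKne : K m n ≠ 0 := hKpos.ne'
      have hKval := hK m n hnm
      have hne' : (1:ℝ) - ∫ x in Set.Ico (c m) (c n), (1 - x / c n) ∂(lam m) ≠ 0 := by
        rw [← hKval]; exact hKne
      have hbne : c n ≠ 0 := hb.ne'
      have hCne : c 0 ≠ 0 := hC.ne'
      have halg : ∀ I1 I2 A u v : ℝ, 1 - I1 ≠ 0 →
          1 - (I1 + u * v * A + I2) = (1 - I1) * (1 - (1 - I1)⁻¹ * (u * A * v + I2)) := by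
        intro I1 I2 A u v h
        rw [mul_sub, mul_one, mul_inv_cancel_left₀ h]
        ring
      rw [hΛ m, hΛ n, hsplit, hpoint, hJ, hKval]
      exact halg _ _ _ _ _ hne'
  -- (3) the rescaled restrictions agree
  have h3 : ∀ m n, n < m →
      (ENNReal.ofReal (Λ m))⁻¹ • (lam m).restrict (Set.Ioi (c n)) =
        (ENNReal.ofReal (Λ n))⁻¹ • (lam n).restrict (Set.Ioi (c n)) := by
    intro m n hnm
    have hKpos : 0 < K m n := (hKb m n hnm).1
    have hres : (lam n).restrict (Set.Ioi (c n))
        = (ENNReal.ofReal (K m n))⁻¹ • (lam m).restrict (Set.Ioi (c n)) := by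
      conv_lhs => rw [hcons m n hnm]
      rw [Measure.restrict_smul, Measure.restrict_add, Measure.restrict_smul,
        show (Measure.dirac (c n)).restrict (Set.Ioi (c n)) = 0 from
          Measure.restrict_eq_zero.2 (by simp [Measure.dirac_apply, Set.indicator_apply]),
        smul_zero, zero_add, Measure.restrict_restrict measurableSet_Ioi,
        Set.inter_eq_left.mpr Set.Ioi_subset_Ici_self]
    rw [hres, smul_smul]
    congr 1
    rw [hKey m n hnm, ENNReal.ofReal_mul hKpos.le,
      ENNReal.mul_inv (Or.inl (ENNReal.ofReal_pos.2 hKpos).ne') (Or.inl ENNReal.ofReal_ne_top),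
      mul_comm]
  -- compatibility of the normalized family
  have hQres : ∀ m n, n ≤ m →
      ((ENNReal.ofReal (Λ m))⁻¹ • (lam m).restrict (Set.Ioi (c m))).restrict (Set.Ioi (c n))
        = (ENNReal.ofReal (Λ n))⁻¹ • (lam n).restrict (Set.Ioi (c n)) := by
    intro m n hnm
    rcases eq_or_lt_of_le hnm with rfl | h
    · rw [Measure.restrict_smul, Measure.restrict_restrict measurableSet_Ioi, Set.inter_self]
    · rw [Measure.restrict_smul, Measure.restrict_restrict measurableSet_Ioi,
        Set.inter_eq_left.mpr (Set.Ioi_subset_Ioi (hanti h).le), h3 m n h]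
  have hQmono : ∀ n m, n ≤ m → ∀ s : Set ℝ,
      ((ENNReal.ofReal (Λ n))⁻¹ • (lam n).restrict (Set.Ioi (c n))) s
        ≤ ((ENNReal.ofReal (Λ m))⁻¹ • (lam m).restrict (Set.Ioi (c m))) s := by
    intro n m hnm s
    rw [← hQres m n hnm]
    exact Measure.le_iff'.1 Measure.restrict_le_self s
  have hQzero : ∀ n,
      ((ENNReal.ofReal (Λ n))⁻¹ • (lam n).restrict (Set.Ioi (c n))) (Set.Iic 0) = 0 := by
    intro n
    rw [Measure.smul_apply, Measure.restrict_apply measurableSet_Iic, smul_eq_mul]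
    have he : Set.Iic (0:ℝ) ∩ Set.Ioi (c n) = ∅ := by
      apply Set.eq_empty_of_forall_notMem
      rintro x ⟨h1, h2⟩
      have := hcpos n
      simp only [Set.mem_Iic] at h1
      simp only [Set.mem_Ioi] at h2
      linarith
    rw [he]
    simp
  have hQfin : ∀ n (s : Set ℝ),
      ((ENNReal.ofReal (Λ n))⁻¹ • (lam n).restrict (Set.Ioi (c n))) s < ⊤ := by
    intro n s
    haveI := hfin n
    rw [Measure.smul_apply, smul_eq_mul]
    refine ENNReal.mul_lt_top (ENNReal.inv_lt_top.2 (ENNReal.ofReal_pos.2 (hΛb n).1)) ?_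
    exact lt_of_le_of_lt (Measure.le_iff'.1 Measure.restrict_le_self s) (measure_lt_top (lam n) s)
  -- sup/tsum swap
  have hswap : ∀ g : ℕ → ℕ → ENNReal, (∀ i, Monotone fun k => g k i) →
      (⨆ k, ∑' i, g k i) = ∑' i, ⨆ k, g k i := by
    intro g hg
    have h1 : ∀ k, (∑' i, g k i) = ∫⁻ i, g k i ∂Measure.count := fun k => (lintegral_count _).symm
    have h2 : (∑' i, ⨆ k, g k i) = ∫⁻ i, ⨆ k, g k i ∂Measure.count := (lintegral_count _).symm
    simp only [h1, h2]
    exact (lintegral_iSup (fun k => measurable_of_countable _) (fun a b hab i => hg i hab)).symm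
  -- construction of the limit measure
  let μ0 : Measure ℝ := Measure.ofMeasurable
    (fun s _ => ⨆ k, ((ENNReal.ofReal (Λ k))⁻¹ • (lam k).restrict (Set.Ioi (c k))) s)
    (by simp)
    (by
      intro f hfm hfd
      show (⨆ k, ((ENNReal.ofReal (Λ k))⁻¹ • (lam k).restrict (Set.Ioi (c k))) (⋃ i, f i))
        = ∑' i, ⨆ k, ((ENNReal.ofReal (Λ k))⁻¹ • (lam k).restrict (Set.Ioi (c k))) (f i)
      simp only [measure_iUnion hfd hfm]
      exact hswap (fun k i => ((ENNReal.ofReal (Λ k))⁻¹ • (lam k).restrict (Set.Ioi (c k))) (f i))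
        (fun i a b hab => hQmono a b hab (f i)))
  have hμ0 : ∀ s : Set ℝ, MeasurableSet s →
      μ0 s = ⨆ k, ((ENNReal.ofReal (Λ k))⁻¹ • (lam k).restrict (Set.Ioi (c k))) s :=
    fun s hs => Measure.ofMeasurable_apply s hs
  have hμ0res : ∀ n, μ0.restrict (Set.Ioi (c n))
      = (ENNReal.ofReal (Λ n))⁻¹ • (lam n).restrict (Set.Ioi (c n)) := by
    intro n
    refine Measure.ext fun s hs => ?_
    rw [Measure.restrict_apply hs, hμ0 _ (hs.inter measurableSet_Ioi)]
    apply le_antisymm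
    · refine iSup_le fun k => ?_
      calc ((ENNReal.ofReal (Λ k))⁻¹ • (lam k).restrict (Set.Ioi (c k))) (s ∩ Set.Ioi (c n))
          ≤ ((ENNReal.ofReal (Λ (max k n)))⁻¹ •
              (lam (max k n)).restrict (Set.Ioi (c (max k n)))) (s ∩ Set.Ioi (c n)) :=
            hQmono k (max k n) (le_max_left _ _) _
        _ = (((ENNReal.ofReal (Λ (max k n)))⁻¹ •
              (lam (max k n)).restrict (Set.Ioi (c (max k n)))).restrict (Set.Ioi (c n))) s :=
            (Measure.restrict_apply hs).symm
        _ = ((ENNReal.ofReal (Λ n))⁻¹ • (lam n).restrict (Set.Ioi (c n))) s := by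
            rw [hQres (max k n) n (le_max_right _ _)]
    · have h1 : ((ENNReal.ofReal (Λ n))⁻¹ • (lam n).restrict (Set.Ioi (c n))) s
          = ((ENNReal.ofReal (Λ n))⁻¹ • (lam n).restrict (Set.Ioi (c n))) (s ∩ Set.Ioi (c n)) := by
        conv_lhs => rw [← hQres n n le_rfl]
        rw [Measure.restrict_apply hs]
      rw [h1]
      exact le_iSup
        (fun k => ((ENNReal.ofReal (Λ k))⁻¹ • (lam k).restrict (Set.Ioi (c k))) (s ∩ Set.Ioi (c n))) n
  have hμ0Iic : μ0 (Set.Iic 0) = 0 := by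
    rw [hμ0 _ measurableSet_Iic]
    simp [hQzero]
  have hexn : ∀ x : ℝ, 0 < x → ∃ n, c n < x := by
    intro x hx
    exact (hc0.eventually_lt_const hx).exists
  have hIoiU : (⋃ n, Set.Ioi (c n)) = Set.Ioi (0:ℝ) := by
    ext x
    simp only [Set.mem_iUnion, Set.mem_Ioi]
    exact ⟨fun ⟨n, hn⟩ => (hcpos n).trans hn, fun hx => hexn x hx⟩
  have hσ : SigmaFinite μ0 := by
    refine ⟨⟨⟨fun n => Set.Iic 0 ∪ Set.Ioi (c n), fun _ => Set.mem_univ _, fun n => ?_, ?_⟩⟩⟩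
    · refine lt_of_le_of_lt (measure_union_le _ _) ?_
      rw [hμ0Iic, zero_add]
      have h1 : μ0 (Set.Ioi (c n)) = (μ0.restrict (Set.Ioi (c n))) (Set.Ioi (c n)) := by
        rw [Measure.restrict_apply measurableSet_Ioi, Set.inter_self]
      rw [h1, hμ0res n]
      exact hQfin n _
    · apply Set.eq_univ_of_forall
      intro x
      rcases le_or_gt x 0 with h | h
      · exact Set.mem_iUnion.2 ⟨0, Or.inl h⟩
      · obtain ⟨n, hn⟩ := hexn x h
        exact Set.mem_iUnion.2 ⟨n, Or.inr hn⟩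
  -- uniqueness of such a measure
  have huniq : ∀ μ' : Measure ℝ, μ' (Set.Iic 0) = 0 →
      (∀ n, μ'.restrict (Set.Ioi (c n))
        = (ENNReal.ofReal (Λ n))⁻¹ • (lam n).restrict (Set.Ioi (c n))) →
      ∀ s : Set ℝ, MeasurableSet s →
        μ' s = ⨆ k, ((ENNReal.ofReal (Λ k))⁻¹ • (lam k).restrict (Set.Ioi (c k))) s := by
    intro μ' h0 hres s hs
    have hcover : s ⊆ (s ∩ Set.Ioi 0) ∪ (s ∩ Set.Iic 0) := by
      intro x hx
      rcases lt_or_ge 0 x with h | h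
      · exact Or.inl ⟨hx, h⟩
      · exact Or.inr ⟨hx, h⟩
    have hs0 : μ' s = μ' (s ∩ Set.Ioi 0) := by
      refine le_antisymm ?_ (measure_mono Set.inter_subset_left)
      calc μ' s ≤ μ' ((s ∩ Set.Ioi 0) ∪ (s ∩ Set.Iic 0)) := measure_mono hcover
        _ ≤ μ' (s ∩ Set.Ioi 0) + μ' (s ∩ Set.Iic 0) := measure_union_le _ _
        _ = μ' (s ∩ Set.Ioi 0) := by
            rw [measure_mono_null Set.inter_subset_right h0, add_zero]
    have hsU : s ∩ Set.Ioi 0 = ⋃ n, s ∩ Set.Ioi (c n) := by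
      rw [← Set.inter_iUnion, hIoiU]
    have hmono : Monotone fun n => s ∩ Set.Ioi (c n) := by
      intro i j hij
      exact Set.inter_subset_inter_right _ (Set.Ioi_subset_Ioi (hanti.antitone hij))
    rw [hs0, hsU, Monotone.measure_iUnion hmono]
    refine iSup_congr fun k => ?_
    rw [← Measure.restrict_apply hs, hres k]
  have hEU : ∃! μ' : Measure ℝ, SigmaFinite μ' ∧ μ' (Set.Iic 0) = 0 ∧
      ∀ n, μ'.restrict (Set.Ioi (c n))
        = (ENNReal.ofReal (Λ n))⁻¹ • (lam n).restrict (Set.Ioi (c n)) := by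
    refine ⟨μ0, ⟨hσ, hμ0Iic, hμ0res⟩, ?_⟩
    rintro μ' ⟨_, h0', hres'⟩
    refine Measure.ext fun s hs => ?_
    rw [huniq μ' h0' hres' s hs, ← hμ0 s hs]
  -- independence of d/Λ
  have hdpair : ∀ m n, d m / Λ m = d n / Λ n := by
    have key : ∀ m n, n < m → d m / Λ m = d n / Λ n := by
      intro m n hnm
      rw [hdcons m n hnm, hKey m n hnm, div_div]
    intro m n
    rcases lt_trichotomy n m with h | h | h
    · exact key m n h
    · rw [h]
    · exact (key n m h).symm
  -- integrability of min 1 x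
  have hfinI : ∀ μ' : Measure ℝ, μ' (Set.Iic 0) = 0 →
      (∀ n, μ'.restrict (Set.Ioi (c n))
        = (ENNReal.ofReal (Λ n))⁻¹ • (lam n).restrict (Set.Ioi (c n))) →
      (∫⁻ x in Set.Ioi (0:ℝ), ENNReal.ofReal (min 1 x) ∂μ') < ⊤ := by
    intro μ' h0 hres
    haveI := hfin 0
    have hμIoi : ∀ n, μ' (Set.Ioi (c n)) < ⊤ := by
      intro n
      have h1 : μ' (Set.Ioi (c n)) = (μ'.restrict (Set.Ioi (c n))) (Set.Ioi (c n)) := by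
        rw [Measure.restrict_apply measurableSet_Ioi, Set.inter_self]
      rw [h1, hres n]
      exact hQfin n _
    have hatom : ∀ m : ℕ,
        ENNReal.ofReal ((c 0)⁻¹ * ∫ x in Set.Ico (c (m+1)) (c 0), x ∂(lam (m+1)))
          ≤ ENNReal.ofReal (Λ (m+1)) * lam 0 {c 0} := by
      intro m
      have hm0 : (0:ℕ) < m + 1 := Nat.succ_pos m
      have hKΛ : K (m+1) 0 = Λ (m+1) := by rw [hK (m+1) 0 hm0, hΛ (m+1)]
      have hKpos : 0 < K (m+1) 0 := (hKb (m+1) 0 hm0).1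
      have h2 : lam 0 {c 0}
          = (ENNReal.ofReal (K (m+1) 0))⁻¹ *
            (ENNReal.ofReal ((c 0)⁻¹ * ∫ x in Set.Ico (c (m+1)) (c 0), x ∂(lam (m+1)))
              + ((lam (m+1)).restrict (Set.Ici (c 0))) {c 0}) := by
        conv_lhs => rw [hcons (m+1) 0 hm0]
        rw [Measure.smul_apply, Measure.add_apply, Measure.smul_apply,
          Measure.dirac_apply_of_mem (Set.mem_singleton (c 0)), smul_eq_mul, smul_eq_mul, mul_one]
      have hne0 : ENNReal.ofReal (K (m+1) 0) ≠ 0 := (ENNReal.ofReal_pos.2 hKpos).ne'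
      have h3 : ENNReal.ofReal (K (m+1) 0) * lam 0 {c 0}
          = ENNReal.ofReal ((c 0)⁻¹ * ∫ x in Set.Ico (c (m+1)) (c 0), x ∂(lam (m+1)))
            + ((lam (m+1)).restrict (Set.Ici (c 0))) {c 0} := by
        rw [h2, ← mul_assoc, ENNReal.mul_inv_cancel hne0 ENNReal.ofReal_ne_top, one_mul]
      rw [← hKΛ]
      calc ENNReal.ofReal ((c 0)⁻¹ * ∫ x in Set.Ico (c (m+1)) (c 0), x ∂(lam (m+1)))
          ≤ ENNReal.ofReal ((c 0)⁻¹ * ∫ x in Set.Ico (c (m+1)) (c 0), x ∂(lam (m+1)))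
            + ((lam (m+1)).restrict (Set.Ici (c 0))) {c 0} := le_self_add
        _ = ENNReal.ofReal (K (m+1) 0) * lam 0 {c 0} := h3.symm
    have hpiece : ∀ m : ℕ,
        (∫⁻ x in Set.Ioo (c (m+1)) (c 0), ENNReal.ofReal x ∂μ')
          ≤ ENNReal.ofReal (c 0) * lam 0 {c 0} := by
      intro m
      haveI := hfin (m+1)
      have hc1 : 0 < c (m+1) := hcpos (m+1)
      have hμr : μ'.restrict (Set.Ioo (c (m+1)) (c 0))
          = (ENNReal.ofReal (Λ (m+1)))⁻¹ • (lam (m+1)).restrict (Set.Ioo (c (m+1)) (c 0)) := by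
        have h4 : μ'.restrict (Set.Ioo (c (m+1)) (c 0))
            = (μ'.restrict (Set.Ioi (c (m+1)))).restrict (Set.Ioo (c (m+1)) (c 0)) := by
          rw [Measure.restrict_restrict measurableSet_Ioo,
            Set.inter_eq_left.mpr (fun x hx => hx.1)]
        rw [h4, hres (m+1), Measure.restrict_smul,
          Measure.restrict_restrict measurableSet_Ioo,
          Set.inter_eq_left.mpr (fun x hx => hx.1)]
      have hInt : IntegrableOn (fun x => x) (Set.Ico (c (m+1)) (c 0)) (lam (m+1)) := intOnId hc1
      have hae : 0 ≤ᵐ[(lam (m+1)).restrict (Set.Ico (c (m+1)) (c 0))] fun x => x := by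
        filter_upwards [ae_restrict_mem measurableSet_Ico] with x hx
        exact (hc1.le.trans hx.1)
      have hlq : (∫⁻ x in Set.Ico (c (m+1)) (c 0), ENNReal.ofReal x ∂(lam (m+1)))
          = ENNReal.ofReal (∫ x in Set.Ico (c (m+1)) (c 0), x ∂(lam (m+1))) :=
        (ofReal_integral_eq_lintegral_ofReal hInt hae).symm
      have hrw : (∫ x in Set.Ico (c (m+1)) (c 0), x ∂(lam (m+1)))
          = c 0 * ((c 0)⁻¹ * ∫ x in Set.Ico (c (m+1)) (c 0), x ∂(lam (m+1))) := by
        rw [← mul_assoc, mul_inv_cancel₀ (hcpos 0).ne', one_mul]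
      have hΛpos : (0:ENNReal) < ENNReal.ofReal (Λ (m+1)) :=
        ENNReal.ofReal_pos.2 (hΛb (m+1)).1
      calc (∫⁻ x in Set.Ioo (c (m+1)) (c 0), ENNReal.ofReal x ∂μ')
          = (ENNReal.ofReal (Λ (m+1)))⁻¹ *
            ∫⁻ x in Set.Ioo (c (m+1)) (c 0), ENNReal.ofReal x ∂(lam (m+1)) := by
            rw [hμr, lintegral_smul_measure, smul_eq_mul]
        _ ≤ (ENNReal.ofReal (Λ (m+1)))⁻¹ *
            (ENNReal.ofReal (c 0) * (ENNReal.ofReal (Λ (m+1)) * lam 0 {c 0})) := by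
            refine mul_le_mul_right ?_ _
            calc (∫⁻ x in Set.Ioo (c (m+1)) (c 0), ENNReal.ofReal x ∂(lam (m+1)))
                ≤ ∫⁻ x in Set.Ico (c (m+1)) (c 0), ENNReal.ofReal x ∂(lam (m+1)) :=
                  lintegral_mono_set Set.Ioo_subset_Ico_self
              _ = ENNReal.ofReal (c 0) *
                  ENNReal.ofReal ((c 0)⁻¹ * ∫ x in Set.Ico (c (m+1)) (c 0), x ∂(lam (m+1))) := by
                  rw [hlq, hrw, ENNReal.ofReal_mul (hcpos 0).le, ← hrw]
              _ ≤ ENNReal.ofReal (c 0) * (ENNReal.ofReal (Λ (m+1)) * lam 0 {c 0}) :=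
                  mul_le_mul_right (hatom m) _
        _ = ENNReal.ofReal (c 0) * lam 0 {c 0} := by
            rw [show (ENNReal.ofReal (Λ (m+1)))⁻¹ *
                (ENNReal.ofReal (c 0) * (ENNReal.ofReal (Λ (m+1)) * lam 0 {c 0}))
                = ((ENNReal.ofReal (Λ (m+1)))⁻¹ * ENNReal.ofReal (Λ (m+1))) *
                  (ENNReal.ofReal (c 0) * lam 0 {c 0}) by ring,
              ENNReal.inv_mul_cancel hΛpos.ne' ENNReal.ofReal_ne_top, one_mul]
    have hUnionIoo : Set.Ioo (0:ℝ) (c 0) = ⋃ m, Set.Ioo (c (m+1)) (c 0) := by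
      ext x
      simp only [Set.mem_iUnion, Set.mem_Ioo]
      constructor
      · rintro ⟨hx0, hxc⟩
        obtain ⟨n, hn⟩ := hexn x hx0
        exact ⟨n, lt_of_le_of_lt (hanti.antitone (Nat.le_succ n)) hn, hxc⟩
      · rintro ⟨m, hm1, hm2⟩
        exact ⟨(hcpos (m+1)).trans hm1, hm2⟩
    have hmono2 : Monotone fun m : ℕ => Set.Ioo (c (m+1)) (c 0) := by
      intro i j hij
      exact Set.Ioo_subset_Ioo_left (hanti.antitone (Nat.succ_le_succ hij))
    have hρ : (∫⁻ x in Set.Ioo (0:ℝ) (c 0), ENNReal.ofReal x ∂μ')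
        ≤ ENNReal.ofReal (c 0) * lam 0 {c 0} := by
      have hwd : ∀ s : Set ℝ, MeasurableSet s →
          (μ'.withDensity (fun x => ENNReal.ofReal x)) s = ∫⁻ x in s, ENNReal.ofReal x ∂μ' :=
        fun s hs => withDensity_apply _ hs
      rw [← hwd _ measurableSet_Ioo, hUnionIoo, Monotone.measure_iUnion hmono2]
      refine iSup_le fun m => ?_
      rw [hwd _ measurableSet_Ioo]
      exact hpiece m
    have hsplit : Set.Ioi (0:ℝ) = Set.Ioo 0 (c 0) ∪ Set.Ici (c 0) :=
      (Set.Ioo_union_Ici_eq_Ioi (hcpos 0)).symm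
    have hdisj : Disjoint (Set.Ioo (0:ℝ) (c 0)) (Set.Ici (c 0)) := by
      rw [Set.disjoint_left]
      rintro x ⟨_, h1⟩ h2
      exact absurd h2 (not_le.2 h1)
    rw [hsplit, lintegral_union measurableSet_Ici hdisj]
    refine ENNReal.add_lt_top.2 ⟨?_, ?_⟩
    · refine lt_of_le_of_lt (le_trans (lintegral_mono fun x => ?_) hρ) ?_
      · exact ENNReal.ofReal_le_ofReal (min_le_right 1 x)
      · exact ENNReal.mul_lt_top ENNReal.ofReal_lt_top (measure_lt_top (lam 0) _)
    · calc ∫⁻ x in Set.Ici (c 0), ENNReal.ofReal (min 1 x) ∂μ'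
          ≤ ∫⁻ _x in Set.Ici (c 0), 1 ∂μ' :=
            lintegral_mono fun x => ENNReal.ofReal_le_one.2 (min_le_left 1 x)
        _ = μ' (Set.Ici (c 0)) := setLIntegral_one _
        _ ≤ μ' (Set.Ioi (c 1)) :=
            measure_mono (fun x hx => lt_of_lt_of_le (hanti Nat.zero_lt_one) hx)
        _ < ⊤ := hμIoi 1
  exact ⟨hKb, hΛb, h3, hEU, hdpair, hfinI⟩
end

section
/- Under the stated consistency assumptions, let λ be the unique σ-finite Borel measure on (0,∞) with λ|_{(ĉₙ,∞)} = Λₙ⁻¹·λ⁽ⁿ⁾|_{(ĉₙ,∞)} for every n, and let d_∂ := d₀ (= dₙ/Λₙ for every n, since Λ₀ = 1). Then for every n ∈ ℕ: 1/Λₙ = λ((ĉₙ,∞)) + d_∂ + ( ĉ₀·(1 − λ((ĉ₀,∞)) − d_∂) − ∫_{(ĉₙ,ĉ₀]} x λ(dx) )/ĉₙ, and λ⁽ⁿ⁾({ĉₙ}) = (Λₙ/ĉₙ)·( ĉ₀·(1 − λ((ĉ₀,∞)) − d_∂) − ∫_{(ĉₙ,ĉ₀]} x λ(dx) ). -/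
open MeasureTheory Real Filter Topology

/-- Representation of the instantaneous distributions `λ⁽ⁿ⁾` in terms of the limiting
measure `μ` (denoted `λ` in the paper) and the cemetery mass `d_∂ = d 0`:
`1/Λₙ = λ((ĉₙ,∞)) + d_∂ + (ĉ₀(1 − λ((ĉ₀,∞)) − d_∂) − ∫_{(ĉₙ,ĉ₀]} x λ(dx))/ĉₙ` and
`λ⁽ⁿ⁾({ĉₙ}) = (Λₙ/ĉₙ)·(ĉ₀(1 − λ((ĉ₀,∞)) − d_∂) − ∫_{(ĉₙ,ĉ₀]} x λ(dx))`. -/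
theorem stmt16 (c : ℕ → ℝ) (hcpos : ∀ n, 0 < c n) (hanti : StrictAnti c)
    (hc0 : Filter.Tendsto c Filter.atTop (nhds 0))
    (lam : ℕ → Measure ℝ) (hfin : ∀ n, IsFiniteMeasure (lam n))
    (hcarry : ∀ n, lam n (Set.Iio (c n)) = 0)
    (d : ℕ → ℝ) (hd : ∀ n, 0 ≤ d n)
    (hmass : ∀ n, (lam n (Set.Ioi 0)).toReal + d n = 1)
    (K : ℕ → ℕ → ℝ)
    (hK : ∀ m n, n < m →
      K m n = 1 - ∫ x in Set.Ico (c m) (c n), (1 - x / c n) ∂(lam m))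
    (hcons : ∀ m n, n < m →
      lam n = (ENNReal.ofReal (K m n))⁻¹ •
        (ENNReal.ofReal ((c n)⁻¹ * ∫ x in Set.Ico (c m) (c n), x ∂(lam m)) •
            Measure.dirac (c n) +
          (lam m).restrict (Set.Ici (c n))))
    (hdcons : ∀ m n, n < m → d n = d m / K m n)
    (Λ : ℕ → ℝ)
    (hΛ : ∀ n, Λ n = 1 - ∫ x in Set.Ico (c n) (c 0), (1 - x / c 0) ∂(lam n))
    (μ : Measure ℝ) (hμ0 : μ (Set.Iic 0) = 0)
    (hμ : ∀ n, μ.restrict (Set.Ioi (c n)) =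
      (ENNReal.ofReal (Λ n))⁻¹ • (lam n).restrict (Set.Ioi (c n))) :
    ∀ n : ℕ,
      1 / Λ n = (μ (Set.Ioi (c n))).toReal + d 0 +
        (c 0 * (1 - (μ (Set.Ioi (c 0))).toReal - d 0) -
          ∫ x in Set.Ioc (c n) (c 0), x ∂μ) / c n ∧
      (lam n {c n}).toReal = (Λ n / c n) *
        (c 0 * (1 - (μ (Set.Ioi (c 0))).toReal - d 0) -
          ∫ x in Set.Ioc (c n) (c 0), x ∂μ) := by
  intro n
  haveI := hfin n
  have hc0pos : 0 < c 0 := hcpos 0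
  have hcn : 0 < c n := hcpos n
  have hc0ne : c 0 ≠ 0 := ne_of_gt hc0pos
  have hcnne : c n ≠ 0 := ne_of_gt hcn
  have hle : c n ≤ c 0 := hanti.antitone (Nat.zero_le n)
  set ν := lam n with hν
  set L := Λ n with hLdef
  set a := (ν {c n}).toReal with ha
  set b := (ν {c 0}).toReal with hb
  set P := (ν (Set.Ioi (c n))).toReal with hP
  set Q := (ν (Set.Ioi (c 0))).toReal with hQ
  set J := ∫ x in Set.Ioc (c n) (c 0), x ∂ν with hJ
  -- integrability of id on Icc and subsets
  have hIntIcc : IntegrableOn (fun x : ℝ => x) (Set.Icc (c n) (c 0)) ν :=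
    continuous_id.integrableOn_Icc
  have hIntIoc : IntegrableOn (fun x : ℝ => x) (Set.Ioc (c n) (c 0)) ν :=
    hIntIcc.mono_set Set.Ioc_subset_Icc_self
  have hIntIco : IntegrableOn (fun x : ℝ => x) (Set.Ico (c n) (c 0)) ν :=
    hIntIcc.mono_set Set.Ico_subset_Icc_self
  have hIntf : IntegrableOn (fun x : ℝ => 1 - x / c 0) (Set.Ico (c n) (c 0)) ν :=
    ((continuous_const.sub (continuous_id.div_const _)).integrableOn_Icc).mono_set
      Set.Ico_subset_Icc_self
  -- toReal additivity helper
  have hadd : ∀ s t : Set ℝ, MeasurableSet t → Disjoint s t →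
      (ν (s ∪ t)).toReal = (ν s).toReal + (ν t).toReal := by
    intro s t ht hst
    rw [measure_union hst ht, ENNReal.toReal_add (measure_ne_top _ _) (measure_ne_top _ _)]
  -- mass on Ioi 0 equals mass on Ici (c n)
  have hIoi0 : ν (Set.Ioi 0) = ν (Set.Ici (c n)) := by
    apply le_antisymm
    · have h1 : ν (Set.Ioi 0) ≤ ν (Set.Iio (c n) ∪ Set.Ici (c n)) :=
        measure_mono (by rw [Set.Iio_union_Ici]; exact Set.subset_univ _)
      calc ν (Set.Ioi 0) ≤ ν (Set.Iio (c n)) + ν (Set.Ici (c n)) :=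
            h1.trans (measure_union_le _ _)
        _ = ν (Set.Ici (c n)) := by rw [hcarry n]; simp [← hν]
    · exact measure_mono (fun x hx => lt_of_lt_of_le hcn hx)
  have hIcin : (ν (Set.Ici (c n))).toReal = a + P := by
    rw [← Set.Ioi_insert, Set.insert_eq]
    exact hadd _ _ measurableSet_Ioi (by simp)
  have hIcic0 : (ν (Set.Ici (c 0))).toReal = b + Q := by
    rw [← Set.Ioi_insert, Set.insert_eq]
    exact hadd _ _ measurableSet_Ioi (by simp)
  have hmassn : a + P + d n = 1 := by
    have := hmass n
    rw [← hν, hIoi0, hIcin] at this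
    exact this
  have hIco : (ν (Set.Ico (c n) (c 0))).toReal = (a + P) - (b + Q) := by
    have h2 : (ν (Set.Ici (c n))).toReal
        = (ν (Set.Ico (c n) (c 0))).toReal + (ν (Set.Ici (c 0))).toReal := by
      rw [← Set.Ico_union_Ici_eq_Ici hle]
      exact hadd _ _ measurableSet_Ici
        (Set.disjoint_left.mpr fun x hx hx' => absurd hx' (not_le.mpr hx.2))
    rw [hIcin, hIcic0] at h2
    linarith
  -- integral over singleton
  have hsing : ∀ x : ℝ, ∫ y in ({x} : Set ℝ), y ∂ν = (ν {x}).toReal * x := by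
    intro x
    rw [Measure.restrict_singleton, integral_smul_measure, integral_dirac]
    simp [mul_comm]
  -- integral splits
  have hIccInt : ∫ x in Set.Icc (c n) (c 0), x ∂ν = c n * a + J := by
    rw [← Set.Ioc_insert_left hle, Set.insert_eq,
      setIntegral_union (by simp) measurableSet_Ioc
        (hIntIcc.mono_set (by simp [hle])) hIntIoc, hsing]
    ring
  have hIcoInt : ∫ x in Set.Ico (c n) (c 0), x ∂ν = c n * a + J - c 0 * b := by
    have h3 : ∫ x in Set.Icc (c n) (c 0), x ∂ν
        = ∫ x in Set.Ico (c n) (c 0), x ∂ν + (ν {c 0}).toReal * c 0 := by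
      rw [← Set.Ico_insert_right hle, Set.insert_eq, Set.union_comm,
        setIntegral_union (by simp) (measurableSet_singleton _)
          hIntIco (hIntIcc.mono_set (by simp [hle])), hsing]
    rw [hIccInt, ← hb] at h3
    linarith
  -- positivity of Λ n
  have hLpos : 0 < L := by
    have hmle : (ν (Set.Ico (c n) (c 0))).toReal ≤ 1 := by
      have h1 : ν (Set.Ico (c n) (c 0)) ≤ ν (Set.Ioi 0) :=
        measure_mono (fun x hx => lt_of_lt_of_le hcn hx.1)
      have h2 := ENNReal.toReal_mono (measure_ne_top _ _) h1
      have h5 := hmass n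
      have h6 := hd n
      rw [← hν] at h5
      linarith
    have hbd : ∫ x in Set.Ico (c n) (c 0), (1 - x / c 0) ∂ν
        ≤ (ν (Set.Ico (c n) (c 0))).toReal * (1 - c n / c 0) := by
      have h7 := setIntegral_mono_on hIntf
        (integrableOn_const (measure_ne_top _ _))
        measurableSet_Ico
        (fun x hx => sub_le_sub_left ((div_le_div_iff_of_pos_right hc0pos).mpr hx.1) 1)
      rwa [setIntegral_const, smul_eq_mul] at h7
    have hq1 : 0 < c n / c 0 := div_pos hcn hc0pos
    have hq2 : c n / c 0 ≤ 1 := (div_le_one hc0pos).mpr hle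
    have hq3 : (0:ℝ) ≤ (ν (Set.Ico (c n) (c 0))).toReal := ENNReal.toReal_nonneg
    have hq4 : (ν (Set.Ico (c n) (c 0))).toReal * (1 - c n / c 0) ≤ 1 - c n / c 0 :=
      mul_le_of_le_one_left (by linarith) hmle
    rw [hLdef, hΛ n, ← hν]
    linarith
  have hLne : L ≠ 0 := ne_of_gt hLpos
  -- d n = d 0 * L
  have hΛ0 : Λ 0 = 1 := by rw [hΛ 0]; simp
  have hdn : d n = d 0 * L := by
    rcases Nat.eq_zero_or_pos n with h0 | hpos
    · have hL1 : L = 1 := by rw [hLdef, h0]; exact hΛ0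
      rw [h0, hL1]; ring
    · have hKΛ : K n 0 = L := by rw [hK n 0 hpos, hLdef, hΛ n]
      have h8 := hdcons n 0 hpos
      rw [hKΛ] at h8
      rw [h8]; field_simp
  -- expand Λ n via the integral
  have F3 : L = 1 - ((a + P) - (b + Q)) + (c n * a + J - c 0 * b) / c 0 := by
    have hsub : ∫ x in Set.Ico (c n) (c 0), (1 - x / c 0) ∂ν
        = ∫ x in Set.Ico (c n) (c 0), (1:ℝ) ∂ν
          - ∫ x in Set.Ico (c n) (c 0), (x / c 0) ∂ν :=
      integral_sub (integrableOn_const (measure_ne_top _ _))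
        (hIntIco.div_const _)
    rw [hLdef, hΛ n, ← hν, hsub, integral_div, setIntegral_const, smul_eq_mul, mul_one, measureReal_def,
      hIco, hIcoInt]
    ring
  have e3 : c 0 * L = c 0 * (d 0 * L) + c 0 * Q + c n * a + J := by
    have h4 : c 0 * ((c n * a + J - c 0 * b) / c 0) = c n * a + J - c 0 * b :=
      mul_div_cancel₀ _ hc0ne
    linear_combination c 0 * F3 + h4 - c 0 * hmassn + c 0 * hdn
  -- transfer μ-quantities to ν-quantities
  have hA : (μ (Set.Ioi (c n))).toReal = P / L := by
    have h1 : μ (Set.Ioi (c n)) = (ENNReal.ofReal L)⁻¹ * ν (Set.Ioi (c n)) := by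
      have h2 := congrArg (fun m : Measure ℝ => m (Set.Ioi (c n))) (hμ n)
      simpa [Measure.restrict_apply measurableSet_Ioi, Measure.smul_apply, smul_eq_mul,
        ← hν, ← hLdef] using h2
    rw [h1, ENNReal.toReal_mul, ENNReal.toReal_inv, ENNReal.toReal_ofReal hLpos.le,
      ← hP, inv_mul_eq_div]
  have hB : (μ (Set.Ioi (c 0))).toReal = Q / L := by
    have h1 : μ (Set.Ioi (c 0)) = (ENNReal.ofReal L)⁻¹ * ν (Set.Ioi (c 0)) := by
      have h2 := congrArg (fun m : Measure ℝ => m (Set.Ioi (c 0))) (hμ n)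
      simpa [Measure.restrict_apply measurableSet_Ioi, Measure.smul_apply, smul_eq_mul,
        Set.inter_eq_self_of_subset_left (Set.Ioi_subset_Ioi hle),
        ← hν, ← hLdef] using h2
    rw [h1, ENNReal.toReal_mul, ENNReal.toReal_inv, ENNReal.toReal_ofReal hLpos.le,
      ← hQ, inv_mul_eq_div]
  have hI : ∫ x in Set.Ioc (c n) (c 0), x ∂μ = J / L := by
    have hres : μ.restrict (Set.Ioc (c n) (c 0))
        = (ENNReal.ofReal L)⁻¹ • ν.restrict (Set.Ioc (c n) (c 0)) := by
      rw [← Measure.restrict_restrict_of_subset Set.Ioc_subset_Ioi_self, hμ n,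
        Measure.restrict_smul, Measure.restrict_restrict_of_subset Set.Ioc_subset_Ioi_self,
        ← hν, ← hLdef]
    rw [hres, integral_smul_measure, ENNReal.toReal_inv, ENNReal.toReal_ofReal hLpos.le,
      smul_eq_mul, ← hJ, inv_mul_eq_div]
  -- key quantity
  have key : c 0 * (1 - Q / L - d 0) - J / L = c n * a / L := by
    field_simp
    linear_combination e3
  constructor
  · rw [hA, hB, hI, key]
    field_simp
    linear_combination hdn - hmassn
  · rw [hB, hI, key]
    field_simp
end
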